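/- For integers t ≥ 2 and r ≥ 2, if n = a(r+t-2)+b with 0 ≤ b ≤ r+t-3, then the r-uniform hypergraph on n vertices consisting of a disjoint cliques on r+t-2 vertices plus one clique on b vertices contains no trace of the star K_{1,t}; hence ex_r(n, Tr(K_{1,t})) ≥ a·C(r+t-2, r) + C(b, r). -/

import Mathlib

/-- An `r`-uniform hypergraph. -/
def IsUniform (r : ℕ) {V : Type*} (H : Finset (Finset V)) : Prop :=
  ∀ e ∈ H, e.card = r

/-- `H` contains the star `K_{1,t}` as a trace: there are distinct base vertices
`w0, w 0, …, w (t-1)` and distinct hyperedges `f i` with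
`f i ∩ {w0, w 0, …, w (t-1)} = {w0, w i}`. -/
def HasStarTrace (t : ℕ) {V : Type*} [DecidableEq V] (H : Finset (Finset V)) : Prop :=
  ∃ (w0 : V) (w : Fin t → V) (f : Fin t → Finset V),
    Function.Injective w ∧ (∀ i, w i ≠ w0) ∧ Function.Injective f ∧
    (∀ i, f i ∈ H) ∧
    ∀ i, f i ∩ insert w0 (Finset.image w Finset.univ) = {w0, w i}

/-- if `n = a(r+t-2)+b`, `b ≤ r+t-3`, there is an `n`-vertex `r`-uniform
hypergraph (disjoint cliques) with no trace of `K_{1,t}` and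
`a·C(r+t-2,r) + C(b,r)` edges; hence `ex_r(n, Tr(K_{1,t}))` is at least this. -/
theorem stmt_1 (r t a b n : ℕ) (hr : 2 ≤ r) (ht : 2 ≤ t)
    (hn : n = a * (r + t - 2) + b) (hb : b ≤ r + t - 3) :
    ∃ H : Finset (Finset (Fin n)), IsUniform r H ∧ ¬ HasStarTrace t H ∧
      H.card = a * (r + t - 2).choose r + b.choose r := by
  classical
  set m := r + t - 2 with hmdef
  have hm : 2 ≤ m := by omega
  have hbm : b < m := by omega
  set Bk : ℕ → Finset (Fin n) :=
    fun i => Finset.univ.filter (fun v => m * i ≤ (v : ℕ) ∧ (v : ℕ) < m * i + m) with hBk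
  have hmemB : ∀ i (v : Fin n), v ∈ Bk i ↔ m * i ≤ (v:ℕ) ∧ (v:ℕ) < m * i + m := by
    intro i v; simp [hBk]
  have hdisj : ∀ i j, i ≠ j → ∀ v : Fin n, v ∈ Bk i → v ∈ Bk j → False := by
    intro i j hij v hi hj
    rw [hmemB] at hi hj
    rcases Nat.lt_or_ge i j with h | h
    · have h1 : m * (i+1) ≤ m * j := Nat.mul_le_mul_left m h
      have h2 : m * (i+1) = m*i + m := by ring
      omega
    · have hj' : j < i := by omega
      have h1 : m * (j+1) ≤ m * i := Nat.mul_le_mul_left m hj'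
      have h2 : m * (j+1) = m*j + m := by ring
      omega
  have hcard_le : ∀ i, (Bk i).card ≤ m := by
    intro i
    have hsub : (Bk i).image Fin.val ⊆ Finset.Ico (m*i) (m*i+m) := by
      intro x hx
      rw [Finset.mem_image] at hx
      obtain ⟨v, hv, rfl⟩ := hx
      rw [hmemB] at hv
      rw [Finset.mem_Ico]; exact hv
    calc (Bk i).card = ((Bk i).image Fin.val).card :=
          (Finset.card_image_of_injective _ Fin.val_injective).symm
      _ ≤ (Finset.Ico (m*i) (m*i+m)).card := Finset.card_le_card hsub
      _ = m := by rw [Nat.card_Ico]; omega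
  have hcard_full : ∀ i, i < a → (Bk i).card = m := by
    intro i hi
    have hle : m * i + m ≤ n := by
      have h1 : m * (i+1) ≤ m * a := Nat.mul_le_mul_left m hi
      have h2 : m * (i+1) = m * i + m := by ring
      have h3 : m * a = a * m := Nat.mul_comm m a
      omega
    have himg : (Bk i).image Fin.val = Finset.Ico (m*i) (m*i+m) := by
      ext x
      simp only [Finset.mem_image, Finset.mem_Ico]
      constructor
      · rintro ⟨v, hv, rfl⟩; rw [hmemB] at hv; exact hv
      · intro hx
        refine ⟨⟨x, by omega⟩, (hmemB _ _).2 ?_, rfl⟩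
        simp only [Fin.val_mk]
        omega
    calc (Bk i).card = ((Bk i).image Fin.val).card :=
          (Finset.card_image_of_injective _ Fin.val_injective).symm
      _ = m := by rw [himg, Nat.card_Ico]; omega
  have hcard_last : (Bk a).card = b := by
    have h3 : m * a = a * m := Nat.mul_comm m a
    have himg : (Bk a).image Fin.val = Finset.Ico (m*a) n := by
      ext x
      simp only [Finset.mem_image, Finset.mem_Ico]
      constructor
      · rintro ⟨v, hv, rfl⟩; rw [hmemB] at hv
        have := v.isLt
        omega
      · intro hx
        refine ⟨⟨x, by omega⟩, (hmemB _ _).2 ?_, rfl⟩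
        simp only [Fin.val_mk]
        omega
    calc (Bk a).card = ((Bk a).image Fin.val).card :=
          (Finset.card_image_of_injective _ Fin.val_injective).symm
      _ = b := by rw [himg, Nat.card_Ico]; omega
  refine ⟨(Finset.range (a+1)).biUnion (fun i => (Bk i).powersetCard r), ?_, ?_, ?_⟩
  · intro e he
    rw [Finset.mem_biUnion] at he
    obtain ⟨i, _, hei⟩ := he
    exact (Finset.mem_powersetCard.1 hei).2
  · rintro ⟨w0, w, f, hwinj, hwne, hfinj, hfH, hfint⟩
    have hblock : ∀ i : Fin t, ∃ c, f i ⊆ Bk c ∧ (f i).card = r := by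
      intro i
      have := hfH i
      rw [Finset.mem_biUnion] at this
      obtain ⟨c, _, hc⟩ := this
      exact ⟨c, (Finset.mem_powersetCard.1 hc).1, (Finset.mem_powersetCard.1 hc).2⟩
    have hw0mem : ∀ i : Fin t, w0 ∈ f i := by
      intro i
      have h1 : w0 ∈ f i ∩ insert w0 (Finset.image w Finset.univ) := by
        rw [hfint i]; exact Finset.mem_insert_self _ _
      exact (Finset.mem_inter.1 h1).1
    have hwmem : ∀ i : Fin t, w i ∈ f i := by
      intro i
      have h1 : w i ∈ f i ∩ insert w0 (Finset.image w Finset.univ) := by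
        rw [hfint i]; exact Finset.mem_insert_of_mem (Finset.mem_singleton_self _)
      exact (Finset.mem_inter.1 h1).1
    set z0 : Fin t := ⟨0, by omega⟩ with hz0
    obtain ⟨c0, hc0sub, hc0card⟩ := hblock z0
    -- all w i lie in Bk c0
    have hwB : ∀ i : Fin t, w i ∈ Bk c0 := by
      intro i
      obtain ⟨c, hcsub, _⟩ := hblock i
      have hcc : c = c0 := by
        by_contra hne
        exact hdisj c c0 hne w0 (hcsub (hw0mem i)) (hc0sub (hw0mem z0))
      exact hcc ▸ hcsub (hwmem i)
    -- the w i, i ≠ z0, are outside f z0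
    have hout : ∀ i : Fin t, i ≠ z0 → w i ∉ f z0 := by
      intro i hi hmem
      have h1 : w i ∈ f z0 ∩ insert w0 (Finset.image w Finset.univ) := by
        rw [Finset.mem_inter]
        exact ⟨hmem, Finset.mem_insert_of_mem (Finset.mem_image_of_mem w (Finset.mem_univ i))⟩
      rw [hfint z0] at h1
      rcases Finset.mem_insert.1 h1 with h | h
      · exact hwne i h
      · exact hi (hwinj (Finset.mem_singleton.1 h))
    set T : Finset (Fin n) := f z0 ∪ (Finset.univ.erase z0).image w with hT
    have hTsub : T ⊆ Bk c0 := by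
      intro x hx
      rcases Finset.mem_union.1 hx with h | h
      · exact hc0sub h
      · obtain ⟨i, _, rfl⟩ := Finset.mem_image.1 h
        exact hwB i
    have hdisjT : Disjoint (f z0) ((Finset.univ.erase z0).image w) := by
      rw [Finset.disjoint_right]
      intro x hx
      obtain ⟨i, hi, rfl⟩ := Finset.mem_image.1 hx
      exact hout i (Finset.mem_erase.1 hi).1
    have hTcard : T.card = r + (t - 1) := by
      rw [hT, Finset.card_union_of_disjoint hdisjT, hc0card,
        Finset.card_image_of_injective _ hwinj, Finset.card_erase_of_mem (Finset.mem_univ z0),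
        Finset.card_univ, Fintype.card_fin]
    have := Finset.card_le_card hTsub
    have := hcard_le c0
    omega
  · rw [Finset.card_biUnion]
    · rw [Finset.sum_range_succ]
      have h1 : ∀ i ∈ Finset.range a, ((Bk i).powersetCard r).card = m.choose r := by
        intro i hi
        rw [Finset.card_powersetCard, hcard_full i (Finset.mem_range.1 hi)]
      rw [Finset.sum_congr rfl h1, Finset.sum_const, Finset.card_range,
        Finset.card_powersetCard, hcard_last, smul_eq_mul]
    · intro i _ j _ hij
      simp only [Function.onFun]; rw [Finset.disjoint_left]
      intro e hei hej
      rw [Finset.mem_powersetCard] at hei hej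
      obtain ⟨v, hv⟩ : e.Nonempty := Finset.card_pos.1 (by omega)
      exact hdisj i j hij v (hei.1 hv) (hej.1 hv)
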